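/- Let Λ(0) = (1/t_f)(−I + Σ₀^{-1/2}(Σ₀^{1/2}Σ_fΣ₀^{1/2})^{1/2}Σ₀^{-1/2}) and M = Λ(0)^{-1}Σ₀^{-1}Λ(0)^{-1}, assuming Λ(0) is invertible. Then Σ(t) = (Λ(0)^{-1} + tI) M^{-1} (Λ(0)^{-1} + tI) satisfies the boundary conditions Σ(0) = Σ₀ and Σ(t_f) = Σ_f. -/

import Mathlib

set_option autoImplicit false
open Matrix
noncomputable section

/-- The old Mathlib `Matrix.PosSemidef.sqrt` (removed upstream), with its original definition. -/
noncomputable def Matrix.PosSemidef.sqrt {m : Type*} [Fintype m] [DecidableEq m]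
    {A : Matrix m m ℝ} (hA : A.PosSemidef) : Matrix m m ℝ :=
  hA.1.eigenvectorUnitary.1 * diagonal ((√·) ∘ hA.1.eigenvalues) *
    (star hA.1.eigenvectorUnitary : Matrix m m ℝ)

theorem Matrix.PosSemidef.posSemidef_sqrt {m : Type*} [Fintype m] [DecidableEq m]
    {A : Matrix m m ℝ} (hA : A.PosSemidef) : hA.sqrt.PosSemidef := by
  unfold Matrix.PosSemidef.sqrt
  have hs : star (hA.1.eigenvectorUnitary : Matrix m m ℝ)
      = (hA.1.eigenvectorUnitary : Matrix m m ℝ)ᴴ := rfl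
  rw [hs]
  apply Matrix.PosSemidef.mul_mul_conjTranspose_same
  rw [Matrix.posSemidef_diagonal_iff]
  intro i
  exact Real.sqrt_nonneg _

/-- The middle matrix `Σ₀^{1/2} Σf Σ₀^{1/2}` is positive semidefinite. -/
theorem midPosSemidef {n : ℕ} {S0 Sf : Matrix (Fin n) (Fin n) ℝ}
    (h0 : S0.PosDef) (hf : Sf.PosDef) :
    (h0.posSemidef.sqrt * Sf * h0.posSemidef.sqrt).PosSemidef := by
  have h := hf.posSemidef.mul_mul_conjTranspose_same h0.posSemidef.sqrt
  rwa [h0.posSemidef.posSemidef_sqrt.isHermitian] at h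

/-- `Λ(0) = (1/t_f)(−I + Σ₀^{-1/2}(Σ₀^{1/2}ΣfΣ₀^{1/2})^{1/2}Σ₀^{-1/2})`. -/
noncomputable def lam0 {n : ℕ} {S0 Sf : Matrix (Fin n) (Fin n) ℝ}
    (h0 : S0.PosDef) (hf : Sf.PosDef) (tf : ℝ) : Matrix (Fin n) (Fin n) ℝ :=
  (1 / tf) • (-1 + (h0.posSemidef.sqrt)⁻¹ * (midPosSemidef h0 hf).sqrt
    * (h0.posSemidef.sqrt)⁻¹)

/-- `M = Λ(0)^{-1} Σ₀^{-1} Λ(0)^{-1}`. -/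
noncomputable def Mmat {n : ℕ} {S0 Sf : Matrix (Fin n) (Fin n) ℝ}
    (h0 : S0.PosDef) (hf : Sf.PosDef) (tf : ℝ) : Matrix (Fin n) (Fin n) ℝ :=
  (lam0 h0 hf tf)⁻¹ * S0⁻¹ * (lam0 h0 hf tf)⁻¹

theorem sqrt_mul_self_port {m : Type*} [Fintype m] [DecidableEq m]
    {A : Matrix m m ℝ} (hA : A.PosSemidef) : hA.sqrt * hA.sqrt = A := by
  unfold Matrix.PosSemidef.sqrt
  set U := hA.1.eigenvectorUnitary with hU
  have hUU : (star U : Matrix m m ℝ) * (U : Matrix m m ℝ) = 1 := Unitary.star_mul_self_of_mem U.2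
  have hd : diagonal ((√·) ∘ hA.1.eigenvalues) * diagonal ((√·) ∘ hA.1.eigenvalues)
      = diagonal (RCLike.ofReal ∘ hA.1.eigenvalues) := by
    rw [diagonal_mul_diagonal]
    congr 1
    funext i
    simp [Real.mul_self_sqrt (hA.eigenvalues_nonneg i)]
  conv_rhs => rw [hA.1.spectral_theorem, Unitary.conjStarAlgAut_apply]
  rw [← hd]
  calc (U : Matrix m m ℝ) * diagonal ((√·) ∘ hA.1.eigenvalues) * (star U : Matrix m m ℝ) *
        ((U : Matrix m m ℝ) * diagonal ((√·) ∘ hA.1.eigenvalues) * (star U : Matrix m m ℝ))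
      = (U : Matrix m m ℝ) * diagonal ((√·) ∘ hA.1.eigenvalues) * ((star U : Matrix m m ℝ) *
        (U : Matrix m m ℝ)) * diagonal ((√·) ∘ hA.1.eigenvalues) * (star U : Matrix m m ℝ) := by
        simp only [Matrix.mul_assoc]
    _ = _ := by rw [hUU, Matrix.mul_one]; simp only [Matrix.mul_assoc]; rfl

/-- `Σ(t) = (Λ(0)^{-1} + tI) M^{-1} (Λ(0)^{-1} + tI)` satisfies
`Σ(0) = Σ₀` and `Σ(t_f) = Σf`. -/
theorem stmt5 {n : ℕ} (S0 Sf : Matrix (Fin n) (Fin n) ℝ)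
    (h0 : S0.PosDef) (hf : Sf.PosDef) (tf : ℝ) (htf : 0 < tf) (hne : S0 ≠ Sf)
    (hinv : IsUnit (lam0 h0 hf tf)) :
    (((lam0 h0 hf tf)⁻¹ + (0 : ℝ) • 1) * (Mmat h0 hf tf)⁻¹
        * ((lam0 h0 hf tf)⁻¹ + (0 : ℝ) • 1) = S0) ∧
    (((lam0 h0 hf tf)⁻¹ + tf • 1) * (Mmat h0 hf tf)⁻¹
        * ((lam0 h0 hf tf)⁻¹ + tf • 1) = Sf) := by
  set L := lam0 h0 hf tf with hL
  set s := h0.posSemidef.sqrt with hs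
  set q := (midPosSemidef h0 hf).sqrt with hq
  have hLd : IsUnit L.det := (Matrix.isUnit_iff_isUnit_det L).mp hinv
  have hS0d : IsUnit S0.det := (Matrix.isUnit_iff_isUnit_det S0).mp h0.isUnit
  have hss : s * s = S0 := sqrt_mul_self_port h0.posSemidef
  have hsd : IsUnit s.det := by
    have : s.det * s.det = S0.det := by rw [← Matrix.det_mul, hss]
    exact isUnit_of_mul_isUnit_left (this ▸ hS0d)
  -- M⁻¹ = L * S0 * L
  have hMinv : (Mmat h0 hf tf)⁻¹ = L * S0 * L := by
    rw [Mmat, Matrix.mul_inv_rev, Matrix.mul_inv_rev,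
      Matrix.nonsing_inv_nonsing_inv _ hLd, Matrix.nonsing_inv_nonsing_inv _ hS0d,
      Matrix.mul_assoc]
  have hLL : L⁻¹ * L = 1 := Matrix.nonsing_inv_mul _ hLd
  have hLL' : L * L⁻¹ = 1 := Matrix.mul_nonsing_inv _ hLd
  constructor
  · rw [hMinv]
    simp only [zero_smul, add_zero]
    calc L⁻¹ * (L * S0 * L) * L⁻¹ = (L⁻¹ * L) * S0 * (L * L⁻¹) := by
          simp only [Matrix.mul_assoc]
        _ = S0 := by rw [hLL, hLL', Matrix.one_mul, Matrix.mul_one]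
  · have hA : 1 + tf • L = s⁻¹ * q * s⁻¹ := by
      rw [hL, lam0, smul_smul, mul_one_div, div_self htf.ne', one_smul]
      abel
    have key : L⁻¹ + tf • 1 = L⁻¹ * (1 + tf • L) := by
      rw [Matrix.mul_add, Matrix.mul_one, Matrix.mul_smul, hLL]
    have key' : L⁻¹ + tf • 1 = (1 + tf • L) * L⁻¹ := by
      rw [Matrix.add_mul, Matrix.one_mul, Matrix.smul_mul, hLL']
    rw [hMinv]; nth_rewrite 1 [key']; rw [key, hA]
    have hssinv : s⁻¹ * S0 * s⁻¹ = 1 := by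
      rw [← hss, ← Matrix.mul_assoc,
        Matrix.nonsing_inv_mul _ hsd, Matrix.one_mul,
        Matrix.mul_nonsing_inv _ hsd]
    have hqq : q * q = s * Sf * s := sqrt_mul_self_port (midPosSemidef h0 hf)
    calc (s⁻¹ * q * s⁻¹) * L⁻¹ * (L * S0 * L) * (L⁻¹ * ((s⁻¹ * q * s⁻¹)))
        = (s⁻¹ * q * s⁻¹) * (L⁻¹ * L) * S0 * (L * L⁻¹) * (s⁻¹ * q * s⁻¹) := by
          simp only [Matrix.mul_assoc]
      _ = (s⁻¹ * q) * (s⁻¹ * S0 * s⁻¹) * (q * s⁻¹) := by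
          rw [hLL, hLL', Matrix.mul_one, Matrix.mul_one]; simp only [Matrix.mul_assoc]
      _ = s⁻¹ * (q * q) * s⁻¹ := by rw [hssinv, Matrix.mul_one]; simp only [Matrix.mul_assoc]
      _ = (s⁻¹ * s) * Sf * (s * s⁻¹) := by rw [hqq]; simp only [Matrix.mul_assoc]
      _ = Sf := by rw [Matrix.nonsing_inv_mul _ hsd, Matrix.mul_nonsing_inv _ hsd,
            Matrix.one_mul, Matrix.mul_one]
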